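/- Let $X$ be a real-valued random variable with $\mathbb{E}[X] = 0$, $\mathbb{E}[X^2] \le \sigma^2$ for some $\sigma > 0$, and $X \le d$ almost surely for some $d > 0$. Then for every $t \ge 0$, $\mathbb{E}[e^{tX}] \le \frac{\sigma^2 e^{td} + d^2 e^{-t\sigma^2/d}}{d^2 + \sigma^2}$. -/

import Mathlib

open MeasureTheory

lemma exp_rep (x : ℝ) : Real.exp x - 1 - x = x^2 * ∫ s in (0:ℝ)..1, (1-s) * Real.exp (s*x) := by
  rcases eq_or_ne x 0 with hx | hx
  · simp [hx]
  · have hder : ∀ s ∈ Set.uIcc (0:ℝ) 1,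
        HasDerivAt (fun s => Real.exp (s*x) * ((x+1)/x^2 - s/x)) ((1-s) * Real.exp (s*x)) s := by
      intro s _
      have h1 : HasDerivAt (fun s : ℝ => Real.exp (s*x)) (x * Real.exp (s*x)) s := by
        have := (hasDerivAt_id s).mul_const x
        simpa [mul_comm, Function.comp_def] using (Real.hasDerivAt_exp (s*x)).comp s this
      have h2 : HasDerivAt (fun s : ℝ => (x+1)/x^2 - s/x) (-(1/x)) s := by
        simpa using ((hasDerivAt_id s).div_const x).const_sub ((x+1)/x^2)
      have := h1.mul h2
      refine this.congr_deriv ?_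
      field_simp
      ring
    have hcont : IntervalIntegrable (fun s => (1-s) * Real.exp (s*x)) volume 0 1 :=
      (Continuous.intervalIntegrable (by continuity) 0 1)
    have := intervalIntegral.integral_eq_sub_of_hasDerivAt hder hcont
    rw [this]
    field_simp
    simp
    ring

lemma rep_mono {u v : ℝ} (h : u ≤ v) :
    (∫ s in (0:ℝ)..1, (1-s) * Real.exp (s*u)) ≤ ∫ s in (0:ℝ)..1, (1-s) * Real.exp (s*v) := by
  apply intervalIntegral.integral_mono_on zero_le_one
    (Continuous.intervalIntegrable (by continuity) 0 1) (Continuous.intervalIntegrable (by continuity) 0 1)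
  intro s hs
  have h1 : (0:ℝ) ≤ 1 - s := by linarith [hs.2]
  have h2 : Real.exp (s*u) ≤ Real.exp (s*v) :=
    Real.exp_le_exp.2 (mul_le_mul_of_nonneg_left h hs.1)
  exact mul_le_mul_of_nonneg_left h2 h1

lemma key {u v : ℝ} (h : u ≤ v) :
    v^2 * (Real.exp u - 1 - u) ≤ u^2 * (Real.exp v - 1 - v) := by
  rw [exp_rep u, exp_rep v]
  rw [← mul_assoc, ← mul_assoc, mul_comm (v^2) (u^2)]
  exact mul_le_mul_of_nonneg_left (rep_mono h) (by positivity)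

/-- Bennett's inequality for the moment generating function. -/
theorem stmt_1 {Ω : Type*} [MeasurableSpace Ω] (μ : Measure Ω) [IsProbabilityMeasure μ]
    (X : Ω → ℝ) (d σ : ℝ) (hd : 0 < d) (hσ : 0 < σ)
    (hX1 : Integrable X μ) (hmean : ∫ ω, X ω ∂μ = 0)
    (hX2 : Integrable (fun ω => X ω ^ 2) μ) (hvar : ∫ ω, X ω ^ 2 ∂μ ≤ σ ^ 2)
    (hbd : ∀ᵐ ω ∂μ, X ω ≤ d) (t : ℝ) (ht : 0 ≤ t) :
    ∫ ω, Real.exp (t * X ω) ∂μ ≤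
      (σ ^ 2 * Real.exp (t * d) + d ^ 2 * Real.exp (-t * σ ^ 2 / d)) / (d ^ 2 + σ ^ 2) := by
  rcases ht.eq_or_lt with h0 | ht'
  · -- t = 0
    rw [← h0]
    simp only [zero_mul, Real.exp_zero, neg_zero, zero_div, integral_const, measure_univ,
      ENNReal.toReal_one, probReal_univ, smul_eq_mul, one_mul, mul_one]
    rw [le_div_iff₀ (by positivity : (0:ℝ) < d^2+σ^2)]
    ring_nf
    linarith
  -- t > 0
  set c : ℝ := σ^2 / d with hc_def
  have hc : 0 < c := by positivity
  have hdc : 0 < d + c := by linarith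
  set E : ℝ := Real.exp (-t * σ^2 / d) with hE_def
  set B : ℝ := Real.exp (t * d) with hB_def
  have hEpos : 0 < E := Real.exp_pos _
  set K : ℝ := B - E * (1 + t*(d+c)) with hK_def
  have hE' : E = Real.exp (-(t*c)) := by
    rw [hE_def, hc_def]
    congr 1
    ring
  have hEB : B = E * Real.exp (t*(d+c)) := by
    rw [hE', ← Real.exp_add, hB_def]
    congr 1
    ring
  have hK : 0 ≤ K := by
    have h1 : 1 + t*(d+c) ≤ Real.exp (t*(d+c)) := by
      have := Real.add_one_le_exp (t*(d+c)); linarith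
    have := mul_le_mul_of_nonneg_left h1 hEpos.le
    rw [hK_def, hEB]; linarith
  set a2 : ℝ := K / (d+c)^2 with ha2_def
  set a1 : ℝ := E*t + 2*c*a2 with ha1_def
  set a0 : ℝ := E*(1+t*c) + c^2*a2 with ha0_def
  have ha2 : 0 ≤ a2 := by positivity
  -- pointwise bound
  have hpt : ∀ᵐ ω ∂μ, Real.exp (t * X ω) ≤ a0 + a1 * X ω + a2 * X ω ^ 2 := by
    filter_upwards [hbd] with ω hω
    set y := X ω with hy
    have hkey := key (show t*(y+c) ≤ t*(d+c) from
      mul_le_mul_of_nonneg_left (by linarith) ht)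
    set A : ℝ := Real.exp (t*(y+c)) with hA_def
    set Bv : ℝ := Real.exp (t*(d+c)) with hBv_def
    have h2' : t^2 * ((A - 1 - t*(y+c)) * (d+c)^2) ≤ t^2 * ((y+c)^2 * (Bv - 1 - t*(d+c))) := by
      linear_combination hkey
    have h2 : (A - 1 - t*(y+c)) * (d+c)^2 ≤ (y+c)^2 * (Bv - 1 - t*(d+c)) :=
      le_of_mul_le_mul_left h2' (by positivity)
    have h3 : A - 1 - t*(y+c) ≤ (y+c)^2 * (Bv - 1 - t*(d+c)) / (d+c)^2 :=
      (le_div_iff₀ (by positivity)).2 h2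
    have hEA : Real.exp (t * y) = E * A := by
      rw [hE', hA_def, ← Real.exp_add]
      congr 1
      ring
    have h4 := mul_le_mul_of_nonneg_left h3 hEpos.le
    have h5 : a0 + a1 * y + a2 * y^2 =
        E * (1 + t*(y+c)) + E * ((y+c)^2 * (Bv - 1 - t*(d+c)) / (d+c)^2) := by
      rw [ha0_def, ha1_def, ha2_def, hK_def, hEB]
      ring
    rw [hEA, h5]
    linarith [h4]
  -- integrability
  have hg : Integrable (fun ω => a0 + a1 * X ω + a2 * X ω ^ 2) μ :=
    ((integrable_const a0).add (hX1.const_mul a1)).add (hX2.const_mul a2)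
  have hgm : AEStronglyMeasurable (fun ω => Real.exp (t * X ω)) μ :=
    Real.continuous_exp.comp_aestronglyMeasurable (hX1.aestronglyMeasurable.const_mul t)
  have hexp : Integrable (fun ω => Real.exp (t * X ω)) μ := by
    apply Integrable.mono' hg hgm
    filter_upwards [hpt] with ω hω
    rw [Real.norm_eq_abs, abs_of_pos (Real.exp_pos _)]
    exact hω
  have hle : ∫ ω, Real.exp (t * X ω) ∂μ ≤ ∫ ω, (a0 + a1 * X ω + a2 * X ω ^ 2) ∂μ :=
    integral_mono_ae hexp hg hpt
  have i1 : Integrable (fun ω : Ω => a0 + a1 * X ω) μ :=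
    (integrable_const a0).add (hX1.const_mul a1)
  have i2 : Integrable (fun ω : Ω => a2 * X ω ^ 2) μ := hX2.const_mul a2
  have hgint : ∫ ω, (a0 + a1 * X ω + a2 * X ω ^ 2) ∂μ = a0 + a2 * ∫ ω, X ω ^ 2 ∂μ := by
    rw [integral_add i1 i2, integral_add (integrable_const a0) (hX1.const_mul a1),
      integral_const, integral_const_mul, integral_const_mul, hmean]
    simp
  have hfin : a0 + a2 * ∫ ω, X ω ^ 2 ∂μ ≤ a0 + a2 * σ^2 := by
    have := mul_le_mul_of_nonneg_left hvar ha2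
    linarith
  have halg : a0 + a2 * σ^2 = (σ^2 * B + d^2 * E) / (d^2 + σ^2) := by
    rw [ha0_def, ha2_def, hK_def, hc_def]
    have h1 : d ≠ 0 := hd.ne'
    have h2 : d^2 + σ^2 ≠ 0 := by positivity
    have h3 : d + σ^2/d ≠ 0 := by positivity
    field_simp
    ring
  calc ∫ ω, Real.exp (t * X ω) ∂μ ≤ a0 + a2 * ∫ ω, X ω ^ 2 ∂μ := by rw [← hgint]; exact hle
    _ ≤ a0 + a2 * σ^2 := hfin
    _ = (σ^2 * B + d^2 * E) / (d^2 + σ^2) := halg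
    _ = (σ ^ 2 * Real.exp (t * d) + d ^ 2 * Real.exp (-t * σ ^ 2 / d)) / (d ^ 2 + σ ^ 2) := rfl
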